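/- If a convex lattice polygon P contains four horizontally consecutive lattice points (a,b), (a+1,b), (a+2,b), (a+3,b) with b ≥ 3, and also contains the origin, then P contains a lattice point invisible from the origin. -/

import Mathlib

/-- If `b ≥ 3` is odd, the triangle with vertices `(0,0)`, `(a,b)`, `(a+3,b)` contains
a lattice point, different from the origin, that is invisible from the origin. -/
theorem triangle_contains_invisible (a b : ℤ) (hb : 3 ≤ b) (hodd : Odd b) :
    ∃ x y : ℤ,
      ((x : ℝ), (y : ℝ)) ∈ convexHull ℝ
        ({((0 : ℝ), (0 : ℝ)), ((a : ℝ), (b : ℝ)), ((a : ℝ) + 3, (b : ℝ))} : Set (ℝ × ℝ)) ∧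
      (x, y) ≠ (0, 0) ∧ 1 < Int.gcd x y := by
  have hbR : (3 : ℝ) ≤ (b : ℝ) := by exact_mod_cast hb
  have hbpos : (0 : ℝ) < (b : ℝ) := by linarith
  have hb1pos : (0 : ℝ) < (b : ℝ) - 1 := by linarith
  set c : ℤ := a * (b - 1) with hc
  set x : ℤ := 2 * ⌈(c : ℝ) / (2 * b)⌉ with hx
  refine ⟨x, b - 1, ?_, ?_, ?_⟩
  · -- membership in the triangle
    have hceil1 : (c : ℝ) / (2 * b) ≤ (⌈(c : ℝ) / (2 * b)⌉ : ℝ) := Int.le_ceil _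
    have hceil2 : ((⌈(c : ℝ) / (2 * b)⌉ : ℤ) : ℝ) < (c : ℝ) / (2 * b) + 1 :=
      Int.ceil_lt_add_one _
    have h2b : (0 : ℝ) < 2 * (b : ℝ) := by linarith
    have hxlb : (c : ℝ) ≤ (x : ℝ) * b := by
      have := (div_le_iff₀ h2b).mp hceil1
      rw [hx]; push_cast; nlinarith
    have hxub : (x : ℝ) * b ≤ (c : ℝ) + 2 * b := by
      have h := (lt_div_iff₀ h2b).mp
        (by linarith : ((⌈(c : ℝ) / (2 * b)⌉ : ℤ) : ℝ) - 1 < (c : ℝ) / (2 * b))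
      rw [hx]; push_cast; nlinarith [h]
    have hcR : (c : ℝ) = (a : ℝ) * ((b : ℝ) - 1) := by push_cast [hc]; ring
    -- the midpoint on the top edge
    set s : ℝ := ((x : ℝ) * b / (b - 1) - a) / 3 with hs
    have hs0 : 0 ≤ s := by
      rw [hs]
      have : (a : ℝ) ≤ (x : ℝ) * b / (b - 1) := by
        rw [le_div_iff₀ hb1pos]
        nlinarith [hxlb]
      linarith
    have hs1 : s ≤ 1 := by
      rw [hs]
      have : (x : ℝ) * b / (b - 1) ≤ a + 3 := by
        rw [div_le_iff₀ hb1pos]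
        nlinarith [hxub]
      linarith
    set m : ℝ × ℝ := ((x : ℝ) * b / (b - 1), (b : ℝ)) with hm
    have hC : Convex ℝ (convexHull ℝ
        ({((0 : ℝ), (0 : ℝ)), ((a : ℝ), (b : ℝ)), ((a : ℝ) + 3, (b : ℝ))} : Set (ℝ × ℝ))) :=
      convex_convexHull _ _
    have h0 : ((0 : ℝ), (0 : ℝ)) ∈ convexHull ℝ
        ({((0 : ℝ), (0 : ℝ)), ((a : ℝ), (b : ℝ)), ((a : ℝ) + 3, (b : ℝ))} : Set (ℝ × ℝ)) :=
      subset_convexHull _ _ (by simp)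
    have h1 : ((a : ℝ), (b : ℝ)) ∈ convexHull ℝ
        ({((0 : ℝ), (0 : ℝ)), ((a : ℝ), (b : ℝ)), ((a : ℝ) + 3, (b : ℝ))} : Set (ℝ × ℝ)) :=
      subset_convexHull _ _ (by simp)
    have h2 : ((a : ℝ) + 3, (b : ℝ)) ∈ convexHull ℝ
        ({((0 : ℝ), (0 : ℝ)), ((a : ℝ), (b : ℝ)), ((a : ℝ) + 3, (b : ℝ))} : Set (ℝ × ℝ)) :=
      subset_convexHull _ _ (by simp)
    have hmmem : m ∈ convexHull ℝ
        ({((0 : ℝ), (0 : ℝ)), ((a : ℝ), (b : ℝ)), ((a : ℝ) + 3, (b : ℝ))} : Set (ℝ × ℝ)) := by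
      have : m ∈ segment ℝ ((a : ℝ), (b : ℝ)) ((a : ℝ) + 3, (b : ℝ)) := by
        refine ⟨1 - s, s, by linarith, hs0, by ring, ?_⟩
        rw [hm, Prod.ext_iff]
        constructor
        · simp only [Prod.smul_fst, Prod.smul_snd, Prod.fst_add, smul_eq_mul]
          rw [hs]
          ring
        · simp [smul_eq_mul]; ring
      exact hC.segment_subset h1 h2 this
    have : (((x : ℤ) : ℝ), (((b - 1 : ℤ)) : ℝ)) ∈ segment ℝ ((0 : ℝ), (0 : ℝ)) m := by
      refine ⟨1 / b, (b - 1) / b, by positivity, by positivity, by field_simp; ring, ?_⟩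
      rw [hm, Prod.ext_iff]
      push_cast
      constructor
      · simp only [Prod.smul_fst, Prod.fst_add, smul_eq_mul]
        field_simp
        ring
      · simp only [Prod.smul_snd, Prod.snd_add, smul_eq_mul]
        field_simp
        ring
    exact hC.segment_subset h0 hmmem this
  · intro h
    have := (Prod.ext_iff.mp h).2
    omega
  · -- gcd > 1
    have hx2 : (2 : ℤ) ∣ x := ⟨_, rfl⟩
    have hy2 : (2 : ℤ) ∣ (b - 1) := by
      obtain ⟨k, hk⟩ := hodd
      exact ⟨k, by omega⟩
    have hdvd : (2 : ℤ) ∣ (Int.gcd x (b - 1) : ℤ) := Int.dvd_coe_gcd hx2 hy2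
    have hne : Int.gcd x (b - 1) ≠ 0 := by
      intro h
      rw [Int.gcd_eq_zero_iff] at h
      omega
    have h2 : (2 : ℕ) ∣ Int.gcd x (b - 1) := by exact_mod_cast hdvd
    omega
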